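/- Let G : ℝ³ → ℂ³ be the parametrization of the normal bundle of the catenoid in ℂ³ = ℝ³ ⊕ iℝ³ given by G(u, v, w) = (u + i·w cosh u sinh u, cosh u cos v − i·w cosh u cos v, cosh u sin v − i·w cosh u sin v). Then for all (u, v, w), Re( Ω(∂G/∂u, ∂G/∂v, ∂G/∂w) ) = 0, where Ω is the determinant 3-form on ℂ³; i.e. the complex determinant of the three partial derivatives of G is purely imaginary, so the normal bundle of the catenoid is special Lagrangian with phase i = i^{3−2}, an instance of the Harvey–Lawson theorem that the normal bundle of an austere m-submanifold of ℝⁿ is special Lagrangian in ℂⁿ with phase i^{n−m}. -/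

import Mathlib

noncomputable def G (u v w : ℝ) : Fin 3 → ℂ :=
  ![(u : ℂ) + (w * (Real.cosh u * Real.sinh u) : ℝ) * Complex.I,
    ((Real.cosh u * Real.cos v : ℝ) : ℂ) - (w * (Real.cosh u * Real.cos v) : ℝ) * Complex.I,
    ((Real.cosh u * Real.sin v : ℝ) : ℂ) - (w * (Real.cosh u * Real.sin v) : ℝ) * Complex.I]

noncomputable def Gu (u v w : ℝ) : Fin 3 → ℂ := fun i => deriv (fun s => G s v w i) u
noncomputable def Gv (u v w : ℝ) : Fin 3 → ℂ := fun i => deriv (fun s => G u s w i) v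
noncomputable def Gw (u v w : ℝ) : Fin 3 → ℂ := fun i => deriv (fun s => G u v s i) w

noncomputable def detForm3 (v : Fin 3 → Fin 3 → ℂ) : ℂ :=
  Matrix.det (Matrix.of fun i j => v j i)

open Real Complex

lemma Gu_eq (u v w : ℝ) : Gu u v w =
    ![(1 : ℂ) + ((w * (Real.cosh u ^ 2 + Real.sinh u ^ 2) : ℝ) : ℂ) * Complex.I,
      ((Real.sinh u * Real.cos v : ℝ) : ℂ) - ((w * (Real.sinh u * Real.cos v) : ℝ) : ℂ) * Complex.I,
      ((Real.sinh u * Real.sin v : ℝ) : ℂ) - ((w * (Real.sinh u * Real.sin v) : ℝ) : ℂ) * Complex.I] := by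
  funext i
  fin_cases i <;> simp only [Gu, G, Matrix.cons_val_zero, Matrix.cons_val_one, Matrix.head_cons,
    Matrix.cons_val_two, Matrix.tail_cons]
  · have h : HasDerivAt (fun s : ℝ => (s : ℂ) + ((w * (Real.cosh s * Real.sinh s) : ℝ) : ℂ) * Complex.I)
        (1 + ((w * (Real.cosh u ^ 2 + Real.sinh u ^ 2) : ℝ) : ℂ) * Complex.I) u := by
      have h1 : HasDerivAt (fun s : ℝ => w * (Real.cosh s * Real.sinh s))
          (w * (Real.cosh u ^ 2 + Real.sinh u ^ 2)) u := by
        have := (((Real.hasDerivAt_cosh u).mul (Real.hasDerivAt_sinh u))).const_mul w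
        exact this.congr_deriv (by ring)
      have h2 := h1.ofReal_comp.mul_const Complex.I
      have h3 : HasDerivAt (fun s : ℝ => (s : ℂ)) 1 u := by
        simpa using (hasDerivAt_id u).ofReal_comp
      exact h3.add h2
    exact h.deriv
  · have h1 : HasDerivAt (fun s : ℝ => Real.cosh s * Real.cos v) (Real.sinh u * Real.cos v) u :=
      (Real.hasDerivAt_cosh u).mul_const _
    have h2 : HasDerivAt (fun s : ℝ => w * (Real.cosh s * Real.cos v))
        (w * (Real.sinh u * Real.cos v)) u := h1.const_mul w
    exact (h1.ofReal_comp.sub (h2.ofReal_comp.mul_const Complex.I)).deriv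
  · have h1 : HasDerivAt (fun s : ℝ => Real.cosh s * Real.sin v) (Real.sinh u * Real.sin v) u :=
      (Real.hasDerivAt_cosh u).mul_const _
    have h2 : HasDerivAt (fun s : ℝ => w * (Real.cosh s * Real.sin v))
        (w * (Real.sinh u * Real.sin v)) u := h1.const_mul w
    exact (h1.ofReal_comp.sub (h2.ofReal_comp.mul_const Complex.I)).deriv

lemma Gv_eq (u v w : ℝ) : Gv u v w =
    ![(0 : ℂ),
      ((Real.cosh u * -Real.sin v : ℝ) : ℂ) - ((w * (Real.cosh u * -Real.sin v) : ℝ) : ℂ) * Complex.I,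
      ((Real.cosh u * Real.cos v : ℝ) : ℂ) - ((w * (Real.cosh u * Real.cos v) : ℝ) : ℂ) * Complex.I] := by
  funext i
  fin_cases i <;> simp only [Gv, G, Matrix.cons_val_zero, Matrix.cons_val_one, Matrix.head_cons,
    Matrix.cons_val_two, Matrix.tail_cons]
  · simp
  · have h1 : HasDerivAt (fun s : ℝ => Real.cosh u * Real.cos s) (Real.cosh u * -Real.sin v) v := by
      simpa [mul_comm] using (Real.hasDerivAt_cos v).const_mul (Real.cosh u)
    have h2 : HasDerivAt (fun s : ℝ => w * (Real.cosh u * Real.cos s))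
        (w * (Real.cosh u * -Real.sin v)) v := h1.const_mul w
    exact (h1.ofReal_comp.sub (h2.ofReal_comp.mul_const Complex.I)).deriv
  · have h1 : HasDerivAt (fun s : ℝ => Real.cosh u * Real.sin s) (Real.cosh u * Real.cos v) v := by
      simpa [mul_comm] using (Real.hasDerivAt_sin v).const_mul (Real.cosh u)
    have h2 : HasDerivAt (fun s : ℝ => w * (Real.cosh u * Real.sin s))
        (w * (Real.cosh u * Real.cos v)) v := h1.const_mul w
    exact (h1.ofReal_comp.sub (h2.ofReal_comp.mul_const Complex.I)).deriv

lemma Gw_eq (u v w : ℝ) : Gw u v w =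
    ![((Real.cosh u * Real.sinh u : ℝ) : ℂ) * Complex.I,
      -(((Real.cosh u * Real.cos v : ℝ) : ℂ) * Complex.I),
      -(((Real.cosh u * Real.sin v : ℝ) : ℂ) * Complex.I)] := by
  funext i
  fin_cases i <;> simp only [Gw, G, Matrix.cons_val_zero, Matrix.cons_val_one, Matrix.head_cons,
    Matrix.cons_val_two, Matrix.tail_cons]
  · have h1 : HasDerivAt (fun s : ℝ => s * (Real.cosh u * Real.sinh u))
        (Real.cosh u * Real.sinh u) w := by simpa using (hasDerivAt_id w).mul_const _
    have h1 : HasDerivAt (fun s : ℝ => s * (Real.cosh u * Real.sinh u))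
        (Real.cosh u * Real.sinh u) w := by simpa using (hasDerivAt_id w).mul_const _
    have h := ((h1.ofReal_comp.mul_const Complex.I).const_add ((u : ℝ) : ℂ))
    simpa using h.deriv
  · have h1 : HasDerivAt (fun s : ℝ => s * (Real.cosh u * Real.cos v))
        (Real.cosh u * Real.cos v) w := by simpa using (hasDerivAt_id w).mul_const _
    have h := (hasDerivAt_const w (((Real.cosh u * Real.cos v : ℝ) : ℂ))).sub
      (h1.ofReal_comp.mul_const Complex.I)
    exact h.deriv.trans (by simp)
  · have h1 : HasDerivAt (fun s : ℝ => s * (Real.cosh u * Real.sin v))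
        (Real.cosh u * Real.sin v) w := by simpa using (hasDerivAt_id w).mul_const _
    have h := (hasDerivAt_const w (((Real.cosh u * Real.sin v : ℝ) : ℂ))).sub
      (h1.ofReal_comp.mul_const Complex.I)
    exact h.deriv.trans (by simp)

theorem stmt7 (u v w : ℝ) :
    (detForm3 ![Gu u v w, Gv u v w, Gw u v w]).re = 0 := by
  have hc := Real.cosh_sq_sub_sinh_sq u
  have hs := Real.sin_sq_add_cos_sq v
  rw [Gu_eq, Gv_eq, Gw_eq]
  simp only [detForm3, Matrix.det_fin_three, Matrix.of_apply, Matrix.cons_val_zero,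
    Matrix.cons_val_one, Matrix.head_cons, Matrix.cons_val_two, Matrix.tail_cons]
  simp [Complex.add_re, Complex.sub_re, Complex.mul_re, Complex.mul_im, Complex.I_re,
    Complex.I_im, Complex.ofReal_re, Complex.ofReal_im, Complex.sin_ofReal_re,
    Complex.sin_ofReal_im, Complex.cos_ofReal_re, Complex.cos_ofReal_im,
    Complex.sinh_ofReal_re, Complex.sinh_ofReal_im, Complex.cosh_ofReal_re,
    Complex.cosh_ofReal_im, pow_two]
  linear_combination (-(w * Real.cosh u ^ 2 * (Real.sin v ^ 2 + Real.cos v ^ 2))) * hc
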